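/- An almost-square c ≥ 3 can be written as c = 2a + b with almost-squares a, b < c if and only if c + 3 is neither a prime, nor twice a prime, nor twice the square of a prime. -/

import Mathlib

set_option maxHeartbeats 1000000


lemma bmod_sq_le (x : ℤ) (m : ℕ) (hm : 0 < m) : (2 * Int.bmod x m)^2 ≤ (m:ℤ)^2 := by
  have h1 := Int.le_bmod (x := x) hm
  have h2 := Int.bmod_lt (x := x) hm
  have hm' : (0:ℤ) < m := by exact_mod_cast hm
  nlinarith [sq_nonneg (2 * Int.bmod x m), Int.mul_ediv_add_emod (m:ℤ) 2,
    Int.emod_lt_of_pos (m:ℤ) (by norm_num : (0:ℤ) < 2), Int.emod_nonneg (m:ℤ) (by norm_num : (2:ℤ) ≠ 0),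
    Int.mul_ediv_add_emod ((m:ℤ)+1) 2, Int.emod_lt_of_pos ((m:ℤ)+1) (by norm_num : (0:ℤ) < 2),
    Int.emod_nonneg ((m:ℤ)+1) (by norm_num : (2:ℤ) ≠ 0)]

lemma descent_aux (p : ℕ) (hp : p.Prime) :
    ∀ k : ℕ, 0 < k → k < p → ∀ u v : ℤ, u^2 + 2*v^2 = k * p →
    ∃ a b : ℤ, a^2 + 2*b^2 = p := by
  intro k
  induction k using Nat.strong_induction_on with
  | _ k IH =>
  intro hk0 hkp u v huv
  rcases eq_or_lt_of_le (Nat.one_le_iff_ne_zero.mpr hk0.ne') with h1 | h1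
  · exact ⟨u, v, by rw [huv, ← h1]; push_cast; ring⟩
  · -- k ≥ 2
    set r := Int.bmod u k with hr
    set s := Int.bmod v k with hs
    have hru : (k:ℤ) ∣ r - u := Int.dvd_bmod_sub_self
    have hsv : (k:ℤ) ∣ s - v := Int.dvd_bmod_sub_self
    have hkdvd : (k:ℤ) ∣ r^2 + 2*s^2 := by
      have : (k:ℤ) ∣ (r^2 + 2*s^2) - (u^2 + 2*v^2) := by
        have : (r^2 + 2*s^2) - (u^2 + 2*v^2) = (r-u)*(r+u) + 2*((s-v)*(s+v)) := by ring
        rw [this]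
        exact dvd_add (Dvd.dvd.mul_right hru _) (Dvd.dvd.mul_left (Dvd.dvd.mul_right hsv _) 2)
      have h2 : (k:ℤ) ∣ u^2 + 2*v^2 := ⟨p, huv⟩
      have h5 : r^2 + 2*s^2 = ((r^2 + 2*s^2) - (u^2 + 2*v^2)) + (u^2 + 2*v^2) := by ring
      rw [h5]; exact dvd_add this h2
    obtain ⟨j, hj⟩ := hkdvd
    have hj0 : 0 ≤ j := by nlinarith [sq_nonneg r, sq_nonneg s, (by exact_mod_cast hk0 : (0:ℤ) < k)]
    have hk' : (0:ℤ) < k := by exact_mod_cast hk0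
    have hjk : j < k := by
      have b1 := bmod_sq_le u k hk0
      have b2 := bmod_sq_le v k hk0
      nlinarith
    have hjne : j ≠ 0 := by
      intro h0
      rw [h0, mul_zero] at hj
      have hr0 : r = 0 := by nlinarith [sq_nonneg r, sq_nonneg s]
      have hs0 : s = 0 := by nlinarith [sq_nonneg r, sq_nonneg s]
      have hku : (k:ℤ) ∣ u := by rw [hr0] at hru; have := (dvd_neg).mpr hru; simpa using this
      have hkv : (k:ℤ) ∣ v := by rw [hs0] at hsv; have := (dvd_neg).mpr hsv; simpa using this
      obtain ⟨u1, rfl⟩ := hku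
      obtain ⟨v1, rfl⟩ := hkv
      have : (k:ℤ) ∣ p := by
        have h2 : (k:ℤ) * (k * (u1^2 + 2*v1^2)) = k * p := by rw [← huv]; ring
        have h3 : (k:ℤ) * (u1^2 + 2*v1^2) = p :=
          mul_left_cancel₀ (by positivity : (k:ℤ) ≠ 0) h2
        exact ⟨_, h3.symm⟩
      have hkp' : k ∣ p := by exact_mod_cast this
      rcases (Nat.Prime.eq_one_or_self_of_dvd hp k hkp') with h | h
      · omega
      · omega
    -- construct new u', v'
    have hd1 : (k:ℤ) ∣ u*r + 2*v*s := by
      have : u*r + 2*v*s - (u^2 + 2*v^2) = u*(r-u) + 2*(v*(s-v)) := by ring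
      have h4 : (k:ℤ) ∣ u*r + 2*v*s - (u^2 + 2*v^2) := by
        rw [this]
        exact dvd_add (Dvd.dvd.mul_left hru u) (Dvd.dvd.mul_left (Dvd.dvd.mul_left hsv v) 2)
      have h2 : (k:ℤ) ∣ u^2 + 2*v^2 := ⟨p, huv⟩
      have h5 : u*r + 2*v*s = (u*r + 2*v*s - (u^2 + 2*v^2)) + (u^2 + 2*v^2) := by ring
      rw [h5]; exact dvd_add h4 h2
    have hd2 : (k:ℤ) ∣ u*s - v*r := by
      have : u*s - v*r = u*(s-v) - v*(r-u) := by ring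
      rw [this]
      exact dvd_sub (Dvd.dvd.mul_left hsv u) (Dvd.dvd.mul_left hru v)
    obtain ⟨U, hU⟩ := hd1
    obtain ⟨V, hV⟩ := hd2
    have key : U^2 + 2*V^2 = (j.toNat : ℤ) * p := by
      have hident : (u^2+2*v^2) * (r^2+2*s^2) = (u*r+2*v*s)^2 + 2*(u*s - v*r)^2 := by ring
      rw [huv, hj, hU, hV] at hident
      have : (k:ℤ)^2 * (U^2 + 2*V^2) = (k:ℤ)^2 * (j * p) := by ring_nf; ring_nf at hident; linarith
      have := mul_left_cancel₀ (a := (k:ℤ)^2) (by positivity) this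
      rw [Int.toNat_of_nonneg hj0] at *
      linarith [this]
    exact IH j.toNat (by omega) (by omega) (by omega) U V key

lemma descent (p : ℕ) (hp : p.Prime) (u v : ℤ) (hdvd : (p:ℤ) ∣ u^2 + 2*v^2)
    (hnd : ¬ ((p:ℤ) ∣ u ∧ (p:ℤ) ∣ v)) : ∃ a b : ℤ, a^2 + 2*b^2 = p := by
  have hp0 : 0 < p := hp.pos
  set r := Int.bmod u p with hr
  set s := Int.bmod v p with hs
  have hru : (p:ℤ) ∣ r - u := Int.dvd_bmod_sub_self
  have hsv : (p:ℤ) ∣ s - v := Int.dvd_bmod_sub_self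
  have hkdvd : (p:ℤ) ∣ r^2 + 2*s^2 := by
    have h4 : (p:ℤ) ∣ (r^2 + 2*s^2) - (u^2 + 2*v^2) := by
      have : (r^2 + 2*s^2) - (u^2 + 2*v^2) = (r-u)*(r+u) + 2*((s-v)*(s+v)) := by ring
      rw [this]
      exact dvd_add (Dvd.dvd.mul_right hru _) (Dvd.dvd.mul_left (Dvd.dvd.mul_right hsv _) 2)
    have h5 : r^2 + 2*s^2 = ((r^2 + 2*s^2) - (u^2 + 2*v^2)) + (u^2 + 2*v^2) := by ring
    rw [h5]; exact dvd_add h4 hdvd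
  obtain ⟨j, hj⟩ := hkdvd
  have hp' : (0:ℤ) < p := by exact_mod_cast hp0
  have hj0 : 0 ≤ j := by nlinarith [sq_nonneg r, sq_nonneg s]
  have hjp : j < p := by
    have b1 := bmod_sq_le u p hp0
    have b2 := bmod_sq_le v p hp0
    nlinarith
  have hjne : j ≠ 0 := by
    intro h0
    rw [h0, mul_zero] at hj
    have hr0 : r = 0 := by nlinarith [sq_nonneg r, sq_nonneg s]
    have hs0 : s = 0 := by nlinarith [sq_nonneg r, sq_nonneg s]
    refine hnd ⟨?_, ?_⟩
    · rw [hr0] at hru; have := (dvd_neg).mpr hru; simpa using this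
    · rw [hs0] at hsv; have := (dvd_neg).mpr hsv; simpa using this
  have key : r^2 + 2*s^2 = (j.toNat : ℕ) * p := by
    rw [hj, Int.toNat_of_nonneg hj0]
    push_cast
    ring
  exact descent_aux p hp j.toNat (by omega) (by omega) r s (by exact_mod_cast key)


lemma prime_not_sq (p : ℕ) (hp : p.Prime) (a : ℤ) : a^2 ≠ (p:ℤ) := by
  intro h
  have h1 : (a.natAbs)^2 = p := by
    have := congrArg Int.natAbs h
    simpa [Int.natAbs_pow] using this
  have h2 : a.natAbs ∣ p := ⟨a.natAbs, by rw [← h1]; ring⟩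
  rcases hp.eq_one_or_self_of_dvd _ h2 with h | h
  · rw [h] at h1
    norm_num at h1
    have := hp.two_le; omega
  · rw [h] at h1
    nlinarith [hp.two_le]

lemma coprime_of_sq_add (a b : ℤ) (p : ℕ) (hp : p.Prime) (h : a^2 + 2*b^2 = (p:ℤ)) :
    IsCoprime a b := by
  rw [Int.isCoprime_iff_gcd_eq_one]
  set g := Int.gcd a b with hg
  have hga : (g:ℤ) ∣ a := Int.gcd_dvd_left a b
  have hgb : (g:ℤ) ∣ b := Int.gcd_dvd_right a b
  have hg2 : ((g:ℤ))^2 ∣ (p:ℤ) := by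
    rw [← h]
    exact dvd_add (pow_dvd_pow_of_dvd hga 2) (Dvd.dvd.mul_left (pow_dvd_pow_of_dvd hgb 2) 2)
  have hg2' : g^2 ∣ p := by exact_mod_cast hg2
  rcases hp.eq_one_or_self_of_dvd _ hg2' with h1 | h1
  · nlinarith [h1]
  · exfalso; exact prime_not_sq p hp g (by exact_mod_cast h1)

lemma core (M p K : ℕ) (hModd : Odd M) (hp : p.Prime) (hMpK : M = p * K)
    (hK1 : 1 < K) (hKp : K ≠ p) (c d : ℤ) (hc0 : 0 ≤ c) (hd0 : 0 ≤ d)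
    (hcd : c^2 + 2*d^2 = (M:ℤ)) (hcop : IsCoprime c d)
    (descent : ∃ a b : ℤ, a^2 + 2*b^2 = (p:ℤ)) :
    ∃ A B : ℤ, A^2 + 2*B^2 = (M:ℤ) ∧ 1 ≤ A ∧ 1 ≤ B ∧ ¬(A = c ∧ B = d) := by
  have hpInt : Prime (p:ℤ) := Nat.prime_iff_prime_int.mp hp
  have hpodd : ¬ (2 ∣ p) := by
    intro h2
    have : 2 ∣ M := hMpK ▸ Dvd.dvd.mul_right h2 K
    rcases hModd with ⟨w, hw⟩; omega
  have hKodd : ¬ (2 ∣ K) := by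
    intro h2
    have : 2 ∣ M := hMpK ▸ Dvd.dvd.mul_left h2 p
    rcases hModd with ⟨w, hw⟩; omega
  have hModd' : ¬ ((2:ℤ) ∣ (M:ℤ)) := by
    rcases hModd with ⟨w, hw⟩
    rw [hw]; push_cast; intro hcon; omega
  have hM' : (M:ℤ) = (p:ℤ) * K := by exact_mod_cast hMpK
  obtain ⟨a0, b0, hab0⟩ := descent
  set a := |a0| with ha
  set b := |b0| with hb
  have hab : a^2 + 2*b^2 = (p:ℤ) := by rw [ha, hb, sq_abs, sq_abs]; exact hab0
  have ha0 : 0 ≤ a := abs_nonneg a0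
  have hb0 : 0 ≤ b := abs_nonneg b0
  have ha1 : 1 ≤ a := by
    rcases ha0.lt_or_eq with h | h
    · omega
    · exfalso
      rw [← h] at hab
      have : (2:ℤ) ∣ (p:ℤ) := ⟨b^2, by linarith⟩
      exact hpodd (by exact_mod_cast this)
  have hb1 : 1 ≤ b := by
    rcases hb0.lt_or_eq with h | h
    · omega
    · exact absurd (by rw [← h] at hab; linarith : a^2 = (p:ℤ)) (prime_not_sq p hp a)
  have hdvd1 : (p:ℤ) ∣ (c*b - d*a) * (c*b + d*a) := by
    refine ⟨b^2 * K - d^2, ?_⟩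
    nlinarith [hcd, hab, hM']
  have hchoice : ∃ α : ℤ, α^2 = a^2 ∧ |α| = a ∧ (p:ℤ) ∣ c*b - d*α := by
    rcases hpInt.dvd_mul.mp hdvd1 with h | h
    · exact ⟨a, rfl, abs_abs a0, h⟩
    · refine ⟨-a, by ring, by rw [abs_neg]; exact abs_abs a0, ?_⟩
      have he : c*b - d*(-a) = c*b + d*a := by ring
      rw [he]; exact h
  obtain ⟨α, hα2, hαabs, hdiv⟩ := hchoice
  have hαne : α ≠ 0 := by intro h; rw [h] at hαabs; simp at hαabs; omega
  have habα : α^2 + 2*b^2 = (p:ℤ) := by rw [hα2]; exact hab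
  have hcopαb : IsCoprime α b := coprime_of_sq_add α b p hp habα
  have hpα : ¬ (p:ℤ) ∣ α := by
    intro h
    have h2 : (p:ℤ)^2 ∣ α^2 := pow_dvd_pow_of_dvd h 2
    have h4 : (0:ℤ) < α^2 := by positivity
    have := Int.le_of_dvd h4 h2
    nlinarith [hp.two_le, hα2]
  obtain ⟨X, hw⟩ := hdiv
  have hdvd2 : (p:ℤ) ∣ c*α + 2*d*b := by
    have hmul : (p:ℤ) ∣ (c*α + 2*d*b) * α := by
      refine ⟨c - 2*b*X, ?_⟩
      nlinarith [habα, hw]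
    rcases hpInt.dvd_mul.mp hmul with h | h
    · exact h
    · exact absurd h hpα
  obtain ⟨Y, hY⟩ := hdvd2
  have hKrep : Y^2 + 2*X^2 = (K:ℤ) := by
    have hident : (c^2+2*d^2) * (α^2+2*b^2) = (c*α+2*d*b)^2 + 2*(c*b - d*α)^2 := by ring
    rw [hcd, habα, hY, hw, hM'] at hident
    have hpne : (p:ℤ) ≠ 0 := by have := hp.two_le; intro h; simp at h; omega
    have : (p:ℤ)^2 * (Y^2 + 2*X^2) = (p:ℤ)^2 * K := by ring_nf; ring_nf at hident; linarith
    exact mul_left_cancel₀ (pow_ne_zero 2 hpne) this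
  have hYne : Y ≠ 0 := by
    intro h
    rw [h] at hKrep
    have : (2:ℤ) ∣ (K:ℤ) := ⟨X^2, by linarith⟩
    exact hKodd (by exact_mod_cast this)
  set P := α*Y + 2*b*X with hPdef
  set Q := α*X - b*Y with hQdef
  set R := α*Y - 2*b*X with hRdef
  set S := α*X + b*Y with hSdef
  have hMP : P^2 + 2*Q^2 = (M:ℤ) := by
    rw [hM', ← habα, ← hKrep, hPdef, hQdef]; ring
  have hMR : R^2 + 2*S^2 = (M:ℤ) := by
    rw [hM', ← habα, ← hKrep, hRdef, hSdef]; ring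
  have hPne : P ≠ 0 := by
    intro h; rw [h] at hMP; exact hModd' ⟨Q^2, by linarith⟩
  have hRne : R ≠ 0 := by
    intro h; rw [h] at hMR; exact hModd' ⟨S^2, by linarith⟩
  -- degenerate aligned case helper
  have degen : ∀ t G H : ℤ, G^2 + 2*H^2 = (M:ℤ) → G ≠ 0 → H ≠ 0 → t ∣ G → t ∣ H →
      (K:ℤ) = t^2 * (p:ℤ) →
      ∃ A B : ℤ, A^2 + 2*B^2 = (M:ℤ) ∧ 1 ≤ A ∧ 1 ≤ B ∧ ¬(A = c ∧ B = d) := by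
    intro t G H hGH hGne hHne htG htH hKt
    refine ⟨|G|, |H|, by rw [sq_abs, sq_abs]; exact hGH, ?_, ?_, ?_⟩
    · have := abs_pos.mpr hGne; omega
    · have := abs_pos.mpr hHne; omega
    · rintro ⟨hAc, hBd⟩
      have htc : t ∣ c := hAc ▸ (dvd_abs t G).mpr htG
      have htd : t ∣ d := hBd ▸ (dvd_abs t H).mpr htH
      have := hcop.isUnit_of_dvd' htc htd
      rw [Int.isUnit_iff] at this
      have ht2 : t^2 = 1 := by rcases this with h | h <;> rw [h] <;> norm_num
      rw [ht2, one_mul] at hKt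
      exact hKp (by exact_mod_cast hKt)
  by_cases hQ0 : Q = 0
  · -- α*X = b*Y
    have heq : α * X = b * Y := by rw [hQdef] at hQ0; linarith
    have hαbY : α ∣ b * Y := ⟨X, by linarith⟩
    have hαY : α ∣ Y := hcopαb.dvd_of_dvd_mul_left hαbY
    obtain ⟨t, hYt⟩ := hαY
    have htne : t ≠ 0 := fun h => hYne (by rw [hYt, h, mul_zero])
    have hXt : X = b * t := by
      have : α * X = α * (b * t) := by rw [heq, hYt]; ring
      exact mul_left_cancel₀ hαne this
    have hKt : (K:ℤ) = t^2 * (p:ℤ) := by rw [← hKrep, hYt, hXt, ← habα]; ring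
    have hSne : S ≠ 0 := by
      rw [hSdef, hXt, hYt]
      intro h
      have h2 : (2 * (α * b)) * t = 0 := by linarith
      rcases mul_eq_zero.mp h2 with h3 | h3
      · rcases mul_eq_zero.mp h3 with h4 | h4
        · norm_num at h4
        · rcases mul_eq_zero.mp h4 with h5 | h5
          · exact hαne h5
          · omega
      · exact htne h3
    have htR : t ∣ R := by refine ⟨α^2 - 2*b^2, ?_⟩; rw [hRdef, hYt, hXt]; ring
    have htS : t ∣ S := by refine ⟨2*α*b, ?_⟩; rw [hSdef, hYt, hXt]; ring
    exact degen t R S hMR hRne hSne htR htS hKt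
  · by_cases hS0 : S = 0
    · -- α*X = -(b*Y)
      have heq : α * X = -(b * Y) := by
        have h9 : α*X + b*Y = 0 := by rw [← hSdef]; exact hS0
        linarith
      have hαbY' : α ∣ -(b * Y) := ⟨X, heq.symm⟩
      have hαbY : α ∣ b * Y := dvd_neg.mp hαbY'
      have hαY : α ∣ Y := hcopαb.dvd_of_dvd_mul_left hαbY
      obtain ⟨t, hYt⟩ := hαY
      have htne : t ≠ 0 := fun h => hYne (by rw [hYt, h, mul_zero])
      have hXt : X = -(b * t) := by
        have : α * X = α * (-(b * t)) := by rw [heq, hYt]; ring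
        exact mul_left_cancel₀ hαne this
      have hKt : (K:ℤ) = t^2 * (p:ℤ) := by rw [← hKrep, hYt, hXt, ← habα]; ring
      have htP : t ∣ P := by refine ⟨α^2 - 2*b^2, ?_⟩; rw [hPdef, hYt, hXt]; ring
      have htQ : t ∣ Q := by refine ⟨-(2*α*b), ?_⟩; rw [hQdef, hYt, hXt]; ring
      exact degen t P Q hMP hPne hQ0 htP htQ hKt
    · -- both combos nondegenerate; at most one can equal (c,d)
      by_cases hPc : |P| = c ∧ |Q| = d
      · refine ⟨|R|, |S|, by rw [sq_abs, sq_abs]; exact hMR, ?_, ?_, ?_⟩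
        · have := abs_pos.mpr hRne; omega
        · have := abs_pos.mpr hS0; omega
        · rintro ⟨hRc, hSd⟩
          obtain ⟨hPc1, hPc2⟩ := hPc
          have hPR : |P| = |R| := by rw [hPc1, hRc]
          have : P = R ∨ P = -R := abs_eq_abs.mp hPR
          rcases this with h | h
          · -- 4bX = 0 → X = 0
            have hX0 : X = 0 := by
              rw [hPdef, hRdef] at h
              have : (4 * b) * X = 0 := by linarith
              rcases mul_eq_zero.mp this with h' | h'
              · exfalso; omega
              · exact h'
            -- Y ∣ P and Y ∣ Q; coprime c d forces Y unit; K = Y² = 1 contra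
            have htP : Y ∣ P := ⟨α, by rw [hPdef, hX0]; ring⟩
            have htQ : Y ∣ Q := ⟨-b, by rw [hQdef, hX0]; ring⟩
            have htc : Y ∣ c := hPc1 ▸ (dvd_abs Y P).mpr htP
            have htd : Y ∣ d := hPc2 ▸ (dvd_abs Y Q).mpr htQ
            have := hcop.isUnit_of_dvd' htc htd
            rw [Int.isUnit_iff] at this
            have hY2 : Y^2 = 1 := by rcases this with h' | h' <;> rw [h'] <;> norm_num
            rw [hX0] at hKrep
            have : (K:ℤ) = 1 := by rw [← hKrep, hY2]; norm_num
            have : K = 1 := by exact_mod_cast this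
            omega
          · -- P = -R → 2αY = 0, impossible
            rw [hPdef, hRdef] at h
            have h2 : (2 * α) * Y = 0 := by linarith
            rcases mul_eq_zero.mp h2 with h' | h'
            · rcases mul_eq_zero.mp h' with h'' | h''
              · norm_num at h''
              · exact hαne h''
            · exact hYne h'
      · refine ⟨|P|, |Q|, by rw [sq_abs, sq_abs]; exact hMP, ?_, ?_, ?_⟩
        · have := abs_pos.mpr hPne; omega
        · have := abs_pos.mpr hQ0; omega
        · rintro ⟨h1, h2⟩; exact hPc ⟨h1, h2⟩

lemma fwd_prime (n x y : ℕ) (hn2 : 2 ≤ n) (hx1 : 1 ≤ x) (hy1 : 1 ≤ y) (hxn : x < n)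
    (hyn : y < n) (hrep : n^2 + 2 = 2*x^2 + y^2) (hP1 : Nat.Prime (n^2+2)) : False := by
  have hNZ : Prime ((n^2+2 : ℕ) : ℤ) := Nat.prime_iff_prime_int.mp hP1
  have hcast : ((n^2+2 : ℕ) : ℤ) = (n:ℤ)^2 + 2 := by push_cast; ring
  rw [hcast] at hNZ
  have hrepZ : (n:ℤ)^2 + 2 = 2*(x:ℤ)^2 + (y:ℤ)^2 := by exact_mod_cast hrep
  have hx1' : 1 ≤ (x:ℤ) := by exact_mod_cast hx1
  have hy1' : 1 ≤ (y:ℤ) := by exact_mod_cast hy1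
  have hxn' : (x:ℤ) ≤ (n:ℤ) - 1 := by
    have : (x:ℤ) < (n:ℤ) := by exact_mod_cast hxn
    omega
  have hyn' : (y:ℤ) ≤ (n:ℤ) - 1 := by
    have : (y:ℤ) < (n:ℤ) := by exact_mod_cast hyn
    omega
  have hn2' : (2:ℤ) ≤ (n:ℤ) := by exact_mod_cast hn2
  have hdvd : ((n:ℤ)^2 + 2) ∣ ((n:ℤ)*(x:ℤ) - (y:ℤ)) * ((n:ℤ)*(x:ℤ) + (y:ℤ)) := by
    refine ⟨(x:ℤ)^2 - 1, ?_⟩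
    linear_combination hrepZ
  rcases hNZ.dvd_mul.mp hdvd with h | h
  · have hpos : 0 < (n:ℤ)*(x:ℤ) - (y:ℤ) := by nlinarith
    have := Int.le_of_dvd hpos h
    nlinarith
  · have hpos : 0 < (n:ℤ)*(x:ℤ) + (y:ℤ) := by nlinarith
    have := Int.le_of_dvd hpos h
    nlinarith

lemma fwd_2p (n x y p : ℕ) (hn2 : 2 ≤ n) (hx1 : 1 ≤ x) (hy1 : 1 ≤ y) (hxn : x < n)
    (hyn : y < n) (hrep : n^2 + 2 = 2*x^2 + y^2) (hpp : p.Prime) (hP2 : n^2+2 = 2*p) : False := by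
  have hrest : True := trivial
  have h2n : 2 ∣ n := by
    have h2n2 : 2 ∣ n^2 := by omega
    exact (Nat.Prime.dvd_of_dvd_pow Nat.prime_two h2n2)
  obtain ⟨m, hm⟩ := h2n
  have hm1 : 1 ≤ m := by omega
  have h2y : 2 ∣ y := by
    have h2y2 : 2 ∣ y^2 := by omega
    exact (Nat.Prime.dvd_of_dvd_pow Nat.prime_two h2y2)
  obtain ⟨z, hz⟩ := h2y
  have hz1 : 1 ≤ z := by omega
  have hzm : z ≤ m - 1 := by
    -- y ≤ n - 1 and y even, n = 2m
    omega
  have hpZ : Prime ((p:ℕ) : ℤ) := Nat.prime_iff_prime_int.mp hpp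
  -- cast facts
  have hp1 : (x:ℤ)^2 + 2*(z:ℤ)^2 = (p:ℤ) := by
    have : 2*(x^2 + 2*z^2) = 2*p := by
      have hyz : y^2 = 4*z^2 := by rw [hz]; ring
      have hnm : n^2 = 4*m^2 := by rw [hm]; ring
      omega
    have h9 : x^2 + 2*z^2 = p := by omega
    exact_mod_cast h9
  have hp2 : 2*(m:ℤ)^2 + 1 = (p:ℤ) := by
    have hnm : n^2 = 4*m^2 := by rw [hm]; ring
    have h9 : 2*m^2 + 1 = p := by omega
    exact_mod_cast h9
  have hx1' : 1 ≤ (x:ℤ) := by exact_mod_cast hx1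
  have hz1' : 1 ≤ (z:ℤ) := by exact_mod_cast hz1
  have hm1' : 1 ≤ (m:ℤ) := by exact_mod_cast hm1
  have hzm' : (z:ℤ) ≤ (m:ℤ) - 1 := by
    have hzm2 : z + 1 ≤ m := by omega
    have : (z:ℤ) + 1 ≤ (m:ℤ) := by exact_mod_cast hzm2
    omega
  have hxm' : (x:ℤ) ≤ 2*(m:ℤ) - 1 := by
    have hxm2 : x + 1 ≤ 2*m := by omega
    have : (x:ℤ) + 1 ≤ 2*(m:ℤ) := by exact_mod_cast hxm2
    omega
  have hdvd : ((p:ℕ):ℤ) ∣ 2*(((x:ℤ)*(m:ℤ) - (z:ℤ)) * ((x:ℤ)*(m:ℤ) + (z:ℤ))) := by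
    refine ⟨(x:ℤ)^2 - 1, ?_⟩
    linear_combination (-1 : ℤ) * hp1 + ((x:ℤ)^2) * hp2
  have hpne2 : ¬ ((p:ℤ) ∣ 2) := by
    intro h
    have := Int.le_of_dvd (by norm_num) h
    nlinarith
  rcases hpZ.dvd_mul.mp hdvd with h | h
  · exact hpne2 h
  rcases hpZ.dvd_mul.mp h with h' | h'
  · have hpos : 0 < (x:ℤ)*(m:ℤ) - (z:ℤ) := by nlinarith
    have := Int.le_of_dvd hpos h'
    nlinarith
  · have hpos : 0 < (x:ℤ)*(m:ℤ) + (z:ℤ) := by nlinarith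
    have := Int.le_of_dvd hpos h'
    nlinarith

lemma fwd_2p2 (n x y p : ℕ) (hn2 : 2 ≤ n) (hx1 : 1 ≤ x) (hy1 : 1 ≤ y) (hxn : x < n)
    (hyn : y < n) (hrep : n^2 + 2 = 2*x^2 + y^2) (hpp : p.Prime) (hP3 : n^2+2 = 2*p^2) : False := by
  have h2n : 2 ∣ n := by
    have h2n2 : 2 ∣ n^2 := by omega
    exact (Nat.Prime.dvd_of_dvd_pow Nat.prime_two h2n2)
  obtain ⟨m, hm⟩ := h2n
  have hm1 : 1 ≤ m := by omega
  have h2y : 2 ∣ y := by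
    have h2y2 : 2 ∣ y^2 := by omega
    exact (Nat.Prime.dvd_of_dvd_pow Nat.prime_two h2y2)
  obtain ⟨z, hz⟩ := h2y
  have hz1 : 1 ≤ z := by omega
  have hzm : z ≤ m - 1 := by omega
  have hpZ : Prime ((p:ℕ) : ℤ) := Nat.prime_iff_prime_int.mp hpp
  have hyz : y^2 = 4*z^2 := by rw [hz]; ring
  have hnm : n^2 = 4*m^2 := by rw [hm]; ring
  have h9a : x^2 + 2*z^2 = p^2 := by omega
  have h9b : 2*m^2 + 1 = p^2 := by omega
  have hp3N : 3 ≤ p := by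
    rcases Nat.lt_or_ge p 3 with h | h
    · interval_cases p
      · exact absurd hpp (by norm_num)
      · exact absurd hpp (by norm_num)
      · omega
    · exact h
  have hmpN : m + 1 ≤ p := by nlinarith [h9b]
  have hp1 : (x:ℤ)^2 + 2*(z:ℤ)^2 = (p:ℤ)^2 := by exact_mod_cast h9a
  have hp2 : 2*(m:ℤ)^2 + 1 = (p:ℤ)^2 := by exact_mod_cast h9b
  have hx1' : 1 ≤ (x:ℤ) := by exact_mod_cast hx1
  have hz1' : 1 ≤ (z:ℤ) := by exact_mod_cast hz1
  have hm1' : 1 ≤ (m:ℤ) := by exact_mod_cast hm1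
  have hzm' : (z:ℤ) ≤ (m:ℤ) - 1 := by
    have hzm2 : z + 1 ≤ m := by omega
    have : (z:ℤ) + 1 ≤ (m:ℤ) := by exact_mod_cast hzm2
    omega
  have hxm' : (x:ℤ) ≤ 2*(m:ℤ) - 1 := by
    have hxm2 : x + 1 ≤ 2*m := by omega
    have : (x:ℤ) + 1 ≤ 2*(m:ℤ) := by exact_mod_cast hxm2
    omega
  have hp3' : 3 ≤ (p:ℤ) := by exact_mod_cast hp3N
  have hmp : (m:ℤ) ≤ (p:ℤ) - 1 := by
    have : (m:ℤ) + 1 ≤ (p:ℤ) := by exact_mod_cast hmpN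
    omega
  have hpne : (p:ℤ) ≠ 0 := by intro h; rw [h] at hp3'; norm_num at hp3'
  have hpne2 : ¬ ((p:ℤ) ∣ 2) := by
    intro h
    have := Int.le_of_dvd (by norm_num) h
    omega
  have hdvd : ((p:ℤ))^2 ∣ 2*(((x:ℤ)*(m:ℤ) - (z:ℤ)) * ((x:ℤ)*(m:ℤ) + (z:ℤ))) := by
    refine ⟨(x:ℤ)^2 - 1, ?_⟩
    linear_combination (-1 : ℤ) * hp1 + ((x:ℤ)^2) * hp2
  obtain ⟨k, hk⟩ := hdvd
  have hppr : (p:ℤ) ∣ ((x:ℤ)*(m:ℤ) - (z:ℤ)) * ((x:ℤ)*(m:ℤ) + (z:ℤ)) := by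
    have h1 : (p:ℤ) ∣ 2*(((x:ℤ)*(m:ℤ) - (z:ℤ)) * ((x:ℤ)*(m:ℤ) + (z:ℤ))) :=
      ⟨(p:ℤ)*k, by rw [hk]; ring⟩
    rcases hpZ.dvd_mul.mp h1 with h | h
    · exact absurd h hpne2
    · exact h
  have haux1 : ((x:ℤ)-1)*(m:ℤ) ≥ 0 := mul_nonneg (by linarith) (by linarith)
  have haux2 : (2*(m:ℤ)-1-(x:ℤ))*(m:ℤ) ≥ 0 := mul_nonneg (by linarith) (by linarith)
  have hbound1 : 0 < (x:ℤ)*(m:ℤ) - (z:ℤ) ∧ (x:ℤ)*(m:ℤ) - (z:ℤ) < (p:ℤ)^2 := by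
    constructor
    · linarith [haux1]
    · linarith [haux2, hp2]
  have hbound2 : 0 < (x:ℤ)*(m:ℤ) + (z:ℤ) ∧ (x:ℤ)*(m:ℤ) + (z:ℤ) < (p:ℤ)^2 := by
    constructor
    · linarith [haux1]
    · linarith [haux2, hp2]
  have hnz : ¬ ((p:ℤ) ∣ (z:ℤ)) := by
    intro h
    have := Int.le_of_dvd (by omega) h
    omega
  rcases hpZ.dvd_mul.mp hppr with h' | h'
  · obtain ⟨k1, hk1⟩ := h'
    have hkk : 2*k1*((x:ℤ)*(m:ℤ) + (z:ℤ)) = (p:ℤ) * k := by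
      have hstep : (p:ℤ) * (2*k1*((x:ℤ)*(m:ℤ) + (z:ℤ))) = (p:ℤ) * ((p:ℤ)*k) := by
        linear_combination hk - 2*((x:ℤ)*(m:ℤ)+(z:ℤ))*hk1
      exact mul_left_cancel₀ hpne hstep
    have hpk1 : (p:ℤ) ∣ 2*k1*((x:ℤ)*(m:ℤ) + (z:ℤ)) := ⟨k, hkk⟩
    have h2 : (p:ℤ) ∣ (2*k1)*((x:ℤ)*(m:ℤ) + (z:ℤ)) := by
      have he : (2*k1)*((x:ℤ)*(m:ℤ) + (z:ℤ)) = 2*k1*((x:ℤ)*(m:ℤ) + (z:ℤ)) := by ring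
      rw [he]; exact hpk1
    rcases hpZ.dvd_mul.mp h2 with h3 | h3
    · rcases hpZ.dvd_mul.mp h3 with h4 | h4
      · exact hpne2 h4
      · -- p ∣ k1, so p^2 ∣ xm - z
        obtain ⟨k2, hk2⟩ := h4
        have : (p:ℤ)^2 ∣ (x:ℤ)*(m:ℤ) - (z:ℤ) := ⟨k2, by rw [hk1, hk2]; ring⟩
        have := Int.le_of_dvd hbound1.1 this
        omega
    · -- p ∣ xm + z and p ∣ xm - z → p ∣ 2z
      have hdz : (p:ℤ) ∣ 2*(z:ℤ) := by
        obtain ⟨w1, hw1⟩ := h3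
        refine ⟨w1 - k1, ?_⟩
        have : 2*(z:ℤ) = ((x:ℤ)*(m:ℤ) + (z:ℤ)) - ((x:ℤ)*(m:ℤ) - (z:ℤ)) := by ring
        rw [this, hw1, hk1]; ring
      rcases hpZ.dvd_mul.mp hdz with h4 | h4
      · exact hpne2 h4
      · exact hnz h4
  · obtain ⟨k1, hk1⟩ := h'
    have hkk : 2*k1*((x:ℤ)*(m:ℤ) - (z:ℤ)) = (p:ℤ) * k := by
      have hstep : (p:ℤ) * (2*k1*((x:ℤ)*(m:ℤ) - (z:ℤ))) = (p:ℤ) * ((p:ℤ)*k) := by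
        linear_combination hk - 2*((x:ℤ)*(m:ℤ)-(z:ℤ))*hk1
      exact mul_left_cancel₀ hpne hstep
    have h2 : (p:ℤ) ∣ (2*k1)*((x:ℤ)*(m:ℤ) - (z:ℤ)) := by
      refine ⟨k, ?_⟩
      rw [← hkk]
    rcases hpZ.dvd_mul.mp h2 with h3 | h3
    · rcases hpZ.dvd_mul.mp h3 with h4 | h4
      · exact hpne2 h4
      · obtain ⟨k2, hk2⟩ := h4
        have : (p:ℤ)^2 ∣ (x:ℤ)*(m:ℤ) + (z:ℤ) := ⟨k2, by rw [hk1, hk2]; ring⟩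
        have := Int.le_of_dvd hbound2.1 this
        omega
    · have hdz : (p:ℤ) ∣ 2*(z:ℤ) := by
        obtain ⟨w1, hw1⟩ := h3
        refine ⟨k1 - w1, ?_⟩
        have : 2*(z:ℤ) = ((x:ℤ)*(m:ℤ) + (z:ℤ)) - ((x:ℤ)*(m:ℤ) - (z:ℤ)) := by ring
        rw [this, hw1, hk1]; ring
      rcases hpZ.dvd_mul.mp hdz with h4 | h4
      · exact hpne2 h4
      · exact hnz h4

lemma bwd (n : ℕ) (hn2 : 2 ≤ n)
    (hbad : ¬ (Nat.Prime (n^2+2) ∨ (∃ p : ℕ, p.Prime ∧ n^2+2 = 2 * p) ∨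
            (∃ p : ℕ, p.Prime ∧ n^2+2 = 2 * p ^ 2))) :
    ∃ x y : ℕ, 1 ≤ x ∧ 1 ≤ y ∧ x < n ∧ y < n ∧ n^2 + 2 = 2*x^2 + y^2 := by
  push_neg at hbad
  obtain ⟨hP1, hP2, hP3⟩ := hbad
  have hn4 : 4 ≤ n^2 := by
    calc 4 = 2^2 := by norm_num
    _ ≤ n^2 := Nat.pow_le_pow_left hn2 2
  rcases Nat.even_or_odd n with hne | hno
  · -- n even
    obtain ⟨m, hm⟩ := hne
    have hm1 : 1 ≤ m := by omega
    have hnm : n = 2*m := by omega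
    set M := 2*m^2 + 1 with hMdef
    have hm2 : 1 ≤ m^2 := Nat.one_le_pow _ _ hm1
    have hModd : Odd M := ⟨m^2, by omega⟩
    have hNM : n^2 + 2 = 2*M := by rw [hMdef, hnm]; ring
    have hM3 : 3 ≤ M := by omega
    have hMnp : ¬ M.Prime := fun h => (hP2 M h) hNM
    set p := M.minFac with hpdef
    have hpp : p.Prime := Nat.minFac_prime (by omega)
    have hpd : p ∣ M := Nat.minFac_dvd M
    obtain ⟨K, hK⟩ := hpd
    have hp1 : 1 ≤ p := hpp.one_lt.le
    have hK1 : 1 < K := by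
      rcases Nat.lt_or_ge K 2 with h | h
      · interval_cases K
        · omega
        · exfalso; apply hMnp; rw [hK, mul_one]; exact hpp
      · exact h
    have hKp : K ≠ p := by
      intro h
      exact (hP3 p hpp) (by rw [hNM, hK, h]; ring)
    have hpMZ : (p:ℤ) ∣ (M:ℤ) := by exact_mod_cast Int.natCast_dvd_natCast.mpr ⟨K, hK⟩
    have hMcast : ((M:ℕ):ℤ) = 1^2 + 2*(m:ℤ)^2 := by rw [hMdef]; push_cast; ring
    have hdesc : ∃ a b : ℤ, a^2+2*b^2 = (p:ℤ) := by
      apply descent p hpp 1 (m:ℤ)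
      · rw [← hMcast]; exact hpMZ
      · rintro ⟨h1, h2⟩
        have := Int.le_of_dvd one_pos h1
        have h2le : (2:ℤ) ≤ (p:ℤ) := by exact_mod_cast hpp.two_le
        omega
    obtain ⟨A, B, hABM, hA1, hB1, hABne⟩ := core M p K hModd hpp hK hK1 hKp 1 (m:ℤ)
      zero_le_one (by positivity) hMcast.symm isCoprime_one_left hdesc
    have hMZ : (M:ℤ) = 2*(m:ℤ)^2 + 1 := by rw [hMdef]; push_cast; ring
    have hm1' : (1:ℤ) ≤ (m:ℤ) := by exact_mod_cast hm1
    have hBm : B ≤ (m:ℤ) - 1 := by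
      have hBm0 : B ≤ (m:ℤ) := by nlinarith [hABM, hMZ, hA1]
      rcases hBm0.lt_or_eq with h | h
      · omega
      · exfalso
        have hA2 : A^2 = 1 := by nlinarith [hABM, hMZ]
        have : A = 1 := by nlinarith [hA2, hA1]
        exact hABne ⟨this, by rw [h]⟩
    have hA2m : A ≤ 2*(m:ℤ) - 1 := by nlinarith [hABM, hMZ, hB1, hA1]
    refine ⟨A.toNat, (2*B).toNat, ?_, ?_, ?_, ?_, ?_⟩
    · have h1 : (1:ℤ) ≤ ((A.toNat : ℕ):ℤ) := by rw [Int.toNat_of_nonneg (by linarith)]; exact hA1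
      exact_mod_cast h1
    · have h1 : (1:ℤ) ≤ (((2*B).toNat : ℕ):ℤ) := by
        rw [Int.toNat_of_nonneg (by linarith)]; linarith
      exact_mod_cast h1
    · have h1 : ((A.toNat : ℕ):ℤ) < (n:ℤ) := by
        rw [Int.toNat_of_nonneg (by linarith)]
        have : ((n:ℕ):ℤ) = 2*(m:ℤ) := by exact_mod_cast congrArg (Nat.cast : ℕ → ℤ) hnm
        omega
      exact_mod_cast h1
    · have h1 : (((2*B).toNat : ℕ):ℤ) < (n:ℤ) := by
        rw [Int.toNat_of_nonneg (by linarith)]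
        have : ((n:ℕ):ℤ) = 2*(m:ℤ) := by exact_mod_cast congrArg (Nat.cast : ℕ → ℤ) hnm
        omega
      exact_mod_cast h1
    · have h1 : ((n:ℕ):ℤ)^2 + 2 = 2*((A.toNat : ℕ):ℤ)^2 + (((2*B).toNat : ℕ):ℤ)^2 := by
        rw [Int.toNat_of_nonneg (by linarith : (0:ℤ) ≤ A),
            Int.toNat_of_nonneg (by linarith : (0:ℤ) ≤ 2*B)]
        have hcn : ((n:ℕ):ℤ) = 2*(m:ℤ) := by exact_mod_cast congrArg (Nat.cast : ℕ → ℤ) hnm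
        rw [hcn]
        nlinarith [hABM, hMZ]
      exact_mod_cast h1
  · -- n odd
    set N := n^2 + 2 with hNdef
    have hNodd : Odd N := by
      have h1 : Odd (n^2) := hno.pow
      obtain ⟨w, hw⟩ := h1
      exact ⟨w + 1, by omega⟩
    set p := N.minFac with hpdef
    have hpp : p.Prime := Nat.minFac_prime (by omega)
    have hpd : p ∣ N := Nat.minFac_dvd N
    obtain ⟨K, hK⟩ := hpd
    have hK1 : 1 < K := by
      rcases Nat.lt_or_ge K 2 with h | h
      · interval_cases K
        · omega
        · exfalso
          apply hP1
          simp only [mul_one] at hK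
          rw [hK]
          exact hpp
      · exact h
    have hKp : K ≠ p := by
      intro h
      rw [h] at hK
      -- N = p^2, impossible
      have hpn : n < p := by
        by_contra hcon
        have := Nat.pow_le_pow_left (by omega : p ≤ n) 2
        nlinarith [hK]
      have := Nat.pow_le_pow_left (by omega : n + 1 ≤ p) 2
      nlinarith [hK]
    have hNcast : ((N:ℕ):ℤ) = (n:ℤ)^2 + 2*1^2 := by rw [hNdef]; push_cast; ring
    have hpNZ : (p:ℤ) ∣ (N:ℤ) := by exact_mod_cast Int.natCast_dvd_natCast.mpr ⟨K, hK⟩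
    have hdesc : ∃ a b : ℤ, a^2+2*b^2 = (p:ℤ) := by
      apply descent p hpp (n:ℤ) 1
      · rw [← hNcast]; exact hpNZ
      · rintro ⟨h1, h2⟩
        have := Int.le_of_dvd one_pos h2
        have h2le : (2:ℤ) ≤ (p:ℤ) := by exact_mod_cast hpp.two_le
        omega
    obtain ⟨A, B, hABM, hA1, hB1, hABne⟩ := core N p K hNodd hpp hK hK1 hKp (n:ℤ) 1
      (by positivity) zero_le_one hNcast.symm isCoprime_one_right hdesc
    have hNZ : (N:ℤ) = (n:ℤ)^2 + 2 := by rw [hNdef]; push_cast; ring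
    have hn2' : (2:ℤ) ≤ (n:ℤ) := by exact_mod_cast hn2
    have hAn : A ≤ (n:ℤ) - 1 := by
      have hAn0 : A ≤ (n:ℤ) := by nlinarith [hABM, hNZ, hB1]
      rcases hAn0.lt_or_eq with h | h
      · omega
      · exfalso
        have hB2 : B^2 = 1 := by nlinarith [hABM, hNZ]
        have : B = 1 := by nlinarith [hB2, hB1]
        exact hABne ⟨h, this⟩
    have hBn : B ≤ (n:ℤ) - 1 := by nlinarith [hABM, hNZ, hA1]
    refine ⟨B.toNat, A.toNat, ?_, ?_, ?_, ?_, ?_⟩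
    · have h1 : (1:ℤ) ≤ ((B.toNat : ℕ):ℤ) := by rw [Int.toNat_of_nonneg (by linarith)]; exact hB1
      exact_mod_cast h1
    · have h1 : (1:ℤ) ≤ ((A.toNat : ℕ):ℤ) := by rw [Int.toNat_of_nonneg (by linarith)]; exact hA1
      exact_mod_cast h1
    · have h1 : ((B.toNat : ℕ):ℤ) < (n:ℤ) := by
        rw [Int.toNat_of_nonneg (by linarith)]; omega
      exact_mod_cast h1
    · have h1 : ((A.toNat : ℕ):ℤ) < (n:ℤ) := by
        rw [Int.toNat_of_nonneg (by linarith)]; omega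
      exact_mod_cast h1
    · have h1 : ((n:ℕ):ℤ)^2 + 2 = 2*((B.toNat : ℕ):ℤ)^2 + ((A.toNat : ℕ):ℤ)^2 := by
        rw [Int.toNat_of_nonneg (by linarith : (0:ℤ) ≤ B),
            Int.toNat_of_nonneg (by linarith : (0:ℤ) ≤ A)]
        linarith [hABM, hNZ]
      exact_mod_cast h1

def IsAlmostSquare (c : ℕ) : Prop := ∃ n : ℕ, 1 ≤ n ∧ c = n ^ 2 - 1

theorem almostSquare_two_a_plus_b (c : ℕ) (hc : IsAlmostSquare c) (h3 : 3 ≤ c) :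
    (∃ a b : ℕ, IsAlmostSquare a ∧ IsAlmostSquare b ∧ a < c ∧ b < c ∧ c = 2 * a + b)
      ↔ ¬ (Nat.Prime (c + 3) ∨ (∃ p : ℕ, p.Prime ∧ c + 3 = 2 * p) ∨
            (∃ p : ℕ, p.Prime ∧ c + 3 = 2 * p ^ 2)) := by
  obtain ⟨n, hn1, rfl⟩ := hc
  have hn2sq : 1 ≤ n^2 := Nat.one_le_pow _ _ hn1
  have hn2 : 2 ≤ n := by
    by_contra h
    have : n = 1 := by omega
    rw [this] at h3; norm_num at h3
  have hkey : n^2 - 1 + 3 = n^2 + 2 := by omega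
  rw [hkey]
  constructor
  · rintro ⟨a, b, ⟨x, hx1, rfl⟩, ⟨y, hy1, rfl⟩, hax, hby, heq⟩
    have hx2 : 1 ≤ x^2 := Nat.one_le_pow _ _ hx1
    have hy2 : 1 ≤ y^2 := Nat.one_le_pow _ _ hy1
    have hxn : x < n := by
      by_contra h
      have := Nat.pow_le_pow_left (by omega : n ≤ x) 2
      omega
    have hyn : y < n := by
      by_contra h
      have := Nat.pow_le_pow_left (by omega : n ≤ y) 2
      omega
    have hrep : n^2 + 2 = 2*x^2 + y^2 := by omega
    rintro (hP1 | ⟨p, hpp, hP2⟩ | ⟨p, hpp, hP3⟩)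
    · exact fwd_prime n x y hn2 hx1 hy1 hxn hyn hrep hP1
    · exact fwd_2p n x y p hn2 hx1 hy1 hxn hyn hrep hpp hP2
    · exact fwd_2p2 n x y p hn2 hx1 hy1 hxn hyn hrep hpp hP3
  · intro hbad
    obtain ⟨x, y, hx1, hy1, hxn, hyn, hrep⟩ := bwd n hn2 hbad
    refine ⟨x^2 - 1, y^2 - 1, ⟨x, hx1, rfl⟩, ⟨y, hy1, rfl⟩, ?_, ?_, ?_⟩
    · have := Nat.pow_lt_pow_left hxn (by norm_num : 2 ≠ 0)
      omega
    · have := Nat.pow_lt_pow_left hyn (by norm_num : 2 ≠ 0)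
      omega
    · have hx2 : 1 ≤ x^2 := Nat.one_le_pow _ _ hx1
      have hy2 : 1 ≤ y^2 := Nat.one_le_pow _ _ hy1
      omega
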